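/- Let X be a Banach space and f : X → ℝ be lower semicontinuous, bounded below, and Gateaux differentiable. Then there exists a sequence (x_n) in X such that f(x_n) → inf f and (1 + ‖x_n‖)·‖f'(x_n)‖ → 0. -/

import Mathlib

open Filter

/-- Ekeland's variational principle (non-strict form). -/
lemma ekeland_vp {X : Type*} [NormedAddCommGroup X] [CompleteSpace X]
    {f : X → ℝ} (hlsc : LowerSemicontinuous f) {b : ℝ} (hb : ∀ y, b ≤ f y)
    (x0 : X) {c : ℝ} (hc : 0 < c) :
    ∃ x, f x ≤ f x0 ∧ c * ‖x - x0‖ ≤ f x0 - f x ∧ ∀ y, f x ≤ f y + c * ‖y - x‖ := by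
  -- step existence
  have hstep : ∀ (n : ℕ) (x : X), ∃ y, (f y + c * ‖y - x‖ ≤ f x) ∧
      ∀ z, f z + c * ‖z - x‖ ≤ f x → f y ≤ f z + (1/2 : ℝ)^n := by
    intro n x
    set S : Set X := {z | f z + c * ‖z - x‖ ≤ f x} with hS
    have hxS : x ∈ S := by simp [hS]
    have hne : (f '' S).Nonempty := ⟨f x, x, hxS, rfl⟩
    have hbd : BddBelow (f '' S) := ⟨b, by rintro _ ⟨z, _, rfl⟩; exact hb z⟩
    obtain ⟨a, ⟨y, hyS, rfl⟩, hay⟩ := Real.lt_sInf_add_pos hne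
      (show (0:ℝ) < (1/2:ℝ)^n by positivity)
    exact ⟨y, hyS, fun z hz => le_trans hay.le
      (by have := csInf_le hbd ⟨z, hz, rfl⟩; linarith)⟩
  choose step hstep1 hstep2 using hstep
  set u : ℕ → X := fun n => Nat.rec x0 step n with hu
  have hu0 : u 0 = x0 := rfl
  have husucc : ∀ n, u (n+1) = step n (u n) := fun n => rfl
  have h1 : ∀ n, f (u (n+1)) + c * ‖u (n+1) - u n‖ ≤ f (u n) := by
    intro n; rw [husucc]; exact hstep1 n (u n)
  have h2 : ∀ n z, f z + c * ‖z - u n‖ ≤ f (u n) → f (u (n+1)) ≤ f z + (1/2:ℝ)^n := by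
    intro n z hz; rw [husucc]; exact hstep2 n (u n) z hz
  have hanti : Antitone (fun n => f (u n)) := by
    apply antitone_nat_of_succ_le
    intro n
    have := h1 n
    nlinarith [norm_nonneg (u (n+1) - u n), hc]
  have hchain : ∀ n m, n ≤ m → c * ‖u m - u n‖ ≤ f (u n) - f (u m) := by
    intro n m hnm
    induction m, hnm using Nat.le_induction with
    | base => simp
    | succ m hnm ih =>
      have h3 : ‖u (m+1) - u n‖ ≤ ‖u (m+1) - u m‖ + ‖u m - u n‖ :=
        norm_sub_le_norm_sub_add_norm_sub _ _ _
      have := h1 m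
      nlinarith [hc]
  have hbdd' : BddBelow (Set.range fun n => f (u n)) := ⟨b, by rintro _ ⟨n, rfl⟩; exact hb _⟩
  set L : ℝ := ⨅ n, f (u n) with hL
  have hLten : Tendsto (fun n => f (u n)) atTop (nhds L) := tendsto_atTop_ciInf hanti hbdd'
  have hLle : ∀ n, L ≤ f (u n) := fun n => ciInf_le hbdd' n
  -- Cauchy
  have hcauchy : CauchySeq u := by
    apply cauchySeq_of_le_tendsto_0 (fun N => (f (u N) - L) / c)
    · intro n m N hNn hNm
      rcases le_total n m with h | h
      · have h3 := hchain n m h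
        have h4 : f (u n) ≤ f (u N) := hanti hNn
        have h5 : L ≤ f (u m) := hLle m
        rw [dist_eq_norm, norm_sub_rev, le_div_iff₀ hc]
        nlinarith
      · have h3 := hchain m n h
        have h4 : f (u m) ≤ f (u N) := hanti hNm
        have h5 : L ≤ f (u n) := hLle n
        rw [dist_eq_norm, le_div_iff₀ hc]
        nlinarith
    · have : Tendsto (fun N => f (u N) - L) atTop (nhds (L - L)) :=
        hLten.sub tendsto_const_nhds
      simpa using this.div_const c
  obtain ⟨x, hx⟩ := cauchySeq_tendsto_of_complete hcauchy
  have hfxL : f x ≤ L := by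
    by_contra h
    push_neg at h
    have hmid : L < (L + f x) / 2 := by linarith
    have hmid2 : (L + f x) / 2 < f x := by linarith
    have hev : ∀ᶠ z in nhds x, (L + f x)/2 < f z := hlsc x _ hmid2
    have hev2 : ∀ᶠ n in atTop, (L + f x)/2 < f (u n) := hx.eventually hev
    have hev3 : ∀ᶠ n in atTop, f (u n) < (L + f x)/2 :=
      hLten.eventually (eventually_lt_nhds hmid)
    obtain ⟨n, hn1, hn2⟩ := (hev2.and hev3).exists
    linarith
  have hdist : ∀ n, c * ‖x - u n‖ ≤ f (u n) - L := by
    intro n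
    have hten : Tendsto (fun m => c * ‖u m - u n‖) atTop (nhds (c * ‖x - u n‖)) :=
      (tendsto_const_nhds.mul ((hx.sub tendsto_const_nhds).norm))
    apply le_of_tendsto hten
    filter_upwards [eventually_ge_atTop n] with m hm
    have := hchain n m hm
    have := hLle m
    linarith
  refine ⟨x, ?_, ?_, ?_⟩
  · exact le_trans hfxL (hLle 0)
  · have := hdist 0
    rw [hu0] at this
    linarith [hfxL]
  · intro y
    by_contra hcon
    push_neg at hcon
    have hSn : ∀ n, f (u (n+1)) ≤ f y + (1/2:ℝ)^n := by
      intro n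
      apply h2
      have h3 : ‖y - u n‖ ≤ ‖y - x‖ + ‖x - u n‖ := norm_sub_le_norm_sub_add_norm_sub _ _ _
      have h4 := hdist n
      nlinarith [hc, hfxL]
    have hlhs : Tendsto (fun n => f (u (n+1))) atTop (nhds L) :=
      hLten.comp (tendsto_add_atTop_nat 1)
    have hrhs : Tendsto (fun n => f y + (1/2:ℝ)^n) atTop (nhds (f y + 0)) :=
      tendsto_const_nhds.add (tendsto_pow_atTop_nhds_zero_of_lt_one (by norm_num) (by norm_num))
    have : L ≤ f y + 0 := le_of_tendsto_of_tendsto' hlhs hrhs hSn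
    nlinarith [norm_nonneg (y - x), hfxL, hc]

/-- One-sided derivative bound from a linear lower envelope. -/
lemma deriv_lb {X : Type*} [NormedAddCommGroup X] [NormedSpace ℝ X]
    {f : X → ℝ} {x v : X} {D c : ℝ}
    (hD : HasDerivAt (fun t : ℝ => f (x + t • v)) D 0)
    (hbnd : ∀ t : ℝ, f x ≤ f (x + t • v) + c * (|t| * ‖v‖)) : -(c * ‖v‖) ≤ D := by
  rw [hasDerivAt_iff_tendsto_slope] at hD
  have hmono : nhdsWithin (0:ℝ) (Set.Ioi 0) ≤ nhdsWithin 0 {(0:ℝ)}ᶜ :=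
    nhdsWithin_mono 0 (fun t ht => ne_of_gt ht)
  have hD' := hD.mono_left hmono
  refine ge_of_tendsto hD' ?_
  filter_upwards [self_mem_nhdsWithin] with t ht
  have ht' : (0:ℝ) < t := ht
  rw [slope_def_field, sub_zero, le_div_iff₀ ht']
  simp only [zero_smul, add_zero]
  have h := hbnd t
  rw [abs_of_pos ht'] at h
  nlinarith

lemma norm_deriv_le {X : Type*} [NormedAddCommGroup X] [NormedSpace ℝ X]
    {f : X → ℝ} (f' : X → X →L[ℝ] ℝ)
    (hgateaux : ∀ x v, HasDerivAt (fun t : ℝ => f (x + t • v)) (f' x v) 0)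
    {x : X} {c : ℝ} (hc : 0 ≤ c) (hmin : ∀ y, f x ≤ f y + c * ‖y - x‖) :
    ‖f' x‖ ≤ c := by
  apply ContinuousLinearMap.opNorm_le_bound _ hc
  intro v
  rw [Real.norm_eq_abs, abs_le]
  have hbnd : ∀ w : X, ∀ t : ℝ, f x ≤ f (x + t • w) + c * (|t| * ‖w‖) := by
    intro w t
    have := hmin (x + t • w)
    simpa [norm_smul] using this
  constructor
  · exact deriv_lb (hgateaux x v) (hbnd v)
  · have := deriv_lb (hgateaux x (-v)) (by simpa using hbnd (-v))
    simp only [map_neg, norm_neg] at this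
    linarith

/-- Cerami-type strengthening of Ekeland's variational principle: if `f` is lower
semicontinuous, bounded below and Gateaux differentiable on a Banach space, there is a
minimizing sequence along which `(1 + ‖xₙ‖)·‖f'(xₙ)‖ → 0`. -/
theorem cerami_minimizing_sequence
    {X : Type*} [NormedAddCommGroup X] [NormedSpace ℝ X] [CompleteSpace X]
    (f : X → ℝ) (f' : X → X →L[ℝ] ℝ)
    (hlsc : LowerSemicontinuous f)
    (hbdd : BddBelow (Set.range f))
    (hgateaux : ∀ x v, HasDerivAt (fun t : ℝ => f (x + t • v)) (f' x v) 0) :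
    ∃ x : ℕ → X,
      Tendsto (fun n => f (x n)) atTop (nhds (⨅ y, f y)) ∧
      Tendsto (fun n => (1 + ‖x n‖) * ‖f' (x n)‖) atTop (nhds 0) := by
  set m : ℝ := ⨅ y, f y with hm
  have hmle : ∀ y, m ≤ f y := fun y => ciInf_le hbdd y
  have key : ∀ n : ℕ, ∃ x : X,
      f x ≤ m + 1/((n:ℝ)+1) ∧ (1 + ‖x‖) * ‖f' x‖ ≤ 2/((n:ℝ)+1) := by
    intro n
    have hp : (0:ℝ) < 1/((n:ℝ)+1) := by positivity
    obtain ⟨x0, hx0⟩ : ∃ x0, f x0 < m + 1/((n:ℝ)+1) :=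
      exists_lt_of_ciInf_lt (by linarith)
    have hx0n : (0:ℝ) < 1 + ‖x0‖ := by positivity
    set c : ℝ := (1/((n:ℝ)+1)) / (1 + ‖x0‖) with hc
    have hcpos : 0 < c := by positivity
    obtain ⟨x, h1, h2, h3⟩ := ekeland_vp hlsc hmle x0 hcpos
    have hnorm : ‖f' x‖ ≤ c := norm_deriv_le f' hgateaux hcpos.le h3
    have hceq : c * (1 + ‖x0‖) = 1/((n:ℝ)+1) := by
      rw [hc]; field_simp
    have hdd : c * ‖x - x0‖ ≤ 1/((n:ℝ)+1) := by
      have := hmle x; linarith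
    have hdist : ‖x - x0‖ ≤ 1 + ‖x0‖ := by
      nlinarith [norm_nonneg (x - x0)]
    have hxx : 1 + ‖x‖ ≤ 2 * (1 + ‖x0‖) := by
      have := norm_sub_norm_le x x0
      linarith
    refine ⟨x, by linarith, ?_⟩
    have h4 : (1 + ‖x‖) * ‖f' x‖ ≤ 2 * (1 + ‖x0‖) * c :=
      mul_le_mul hxx hnorm (norm_nonneg _) (by positivity)
    have h5 : 2 * (1 + ‖x0‖) * c = 2/((n:ℝ)+1) := by
      rw [hc]; field_simp
    linarith
  choose x hxa hxb using key
  refine ⟨x, ?_, ?_⟩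
  · refine tendsto_of_tendsto_of_tendsto_of_le_of_le tendsto_const_nhds ?_
      (fun n => hmle (x n)) hxa
    have h := tendsto_const_nhds.add tendsto_one_div_add_atTop_nhds_zero_nat (f := fun _ : ℕ => m)
    simpa using h
  · refine tendsto_of_tendsto_of_tendsto_of_le_of_le tendsto_const_nhds ?_
      (fun n => by positivity) hxb
    have h := tendsto_one_div_add_atTop_nhds_zero_nat.const_mul (2:ℝ)
    simpa [div_eq_mul_inv] using h
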